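/- The trace distance between the density matrices ρ₀ = p|0⟩⟨0| + (1-p)|+⟩⟨+| and ρ₁ = p|1⟩⟨1| + (1-p)|−⟩⟨−| equals √(p² + (1-p)²), where |±⟩ = (|0⟩ ± |1⟩)/√2. -/

import Mathlib

open Matrix

/-- `ρ₀ = p|0⟩⟨0| + (1-p)|+⟩⟨+|` as a 2×2 complex matrix. -/
noncomputable def rho0 (p : ℝ) : Matrix (Fin 2) (Fin 2) ℂ :=
  (p : ℂ) • !![1, 0; 0, 0] + ((1 - p : ℝ) : ℂ) • !![1/2, 1/2; 1/2, 1/2]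

/-- `ρ₁ = p|1⟩⟨1| + (1-p)|−⟩⟨−|` as a 2×2 complex matrix. -/
noncomputable def rho1 (p : ℝ) : Matrix (Fin 2) (Fin 2) ℂ :=
  (p : ℂ) • !![0, 0; 0, 1] + ((1 - p : ℝ) : ℂ) • !![1/2, -(1/2); -(1/2), 1/2]

/-- The trace distance `(1/2)·∑|eigenvalues of ρ₀ - ρ₁|` equals `√(p² + (1-p)²)`
for `p ∈ [1/2, 1]`. -/
theorem trace_distance_rho0_rho1 (p : ℝ) (hp : 1/2 ≤ p) (hp1 : p ≤ 1)
    (h : (rho0 p - rho1 p).IsHermitian) :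
    (1/2) * ∑ i, |h.eigenvalues i| = Real.sqrt (p ^ 2 + (1 - p) ^ 2) := by
  set A := rho0 p - rho1 p with hA
  -- trace of A equals sum of eigenvalues
  have htr : A.trace = ((h.eigenvalues 0 : ℂ) + (h.eigenvalues 1 : ℂ)) := by
    conv_lhs => rw [h.spectral_theorem]
    rw [Unitary.conjStarAlgAut_apply, Matrix.trace_mul_cycle,
      (Matrix.mem_unitaryGroup_iff').mp (h.eigenvectorUnitary).2, Matrix.one_mul]
    simp [Matrix.trace_fin_two, Fin.sum_univ_two]
  have htrA : A.trace = 0 := by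
    simp [hA, rho0, rho1, Matrix.trace_fin_two, Matrix.sub_apply]
  have hsum : h.eigenvalues 0 + h.eigenvalues 1 = 0 := by
    have := htr.symm.trans htrA
    exact_mod_cast this
  -- determinant
  have hdet : A.det = ((h.eigenvalues 0 : ℂ) * (h.eigenvalues 1 : ℂ)) := by
    rw [h.det_eq_prod_eigenvalues, Fin.prod_univ_two]
    norm_num
  have hdetA : A.det = -((p : ℂ) ^ 2 + ((1 - p : ℝ) : ℂ) ^ 2) := by
    simp [hA, rho0, rho1, Matrix.det_fin_two, Matrix.sub_apply]
    ring
  have hprod : h.eigenvalues 0 * h.eigenvalues 1 = -(p ^ 2 + (1 - p) ^ 2) := by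
    have := hdet.symm.trans hdetA
    exact_mod_cast this
  have h1 : h.eigenvalues 1 = -h.eigenvalues 0 := by linarith
  have hsq : (h.eigenvalues 0) ^ 2 = p ^ 2 + (1 - p) ^ 2 := by
    rw [h1] at hprod; nlinarith
  have habs : |h.eigenvalues 0| = Real.sqrt (p ^ 2 + (1 - p) ^ 2) := by
    rw [← hsq, Real.sqrt_sq_eq_abs]
  rw [Fin.sum_univ_two, h1, abs_neg, habs]
  ring
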